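/- Let G be a finite group, N a normal subgroup of G, and S a symmetric generating set of G containing the identity. Let L be a positive integer such that every coset of N in G contains an element of S^L. Then N is generated by S^{2L+1} ∩ N. -/

import Mathlib

open Pointwise

/-- Schreier-type generation lemma: if every coset of a normal subgroup `N` of the finite group
`G` meets `S^L`, then `N` is generated by `S^{2L+1} ∩ N`. -/
theorem schreier_generation (G : Type*) [Group G] [Finite G]
    (N : Subgroup G) [N.Normal]
    (S : Set G) (hSsymm : S⁻¹ = S) (hSone : (1 : G) ∈ S)
    (hSgen : Subgroup.closure S = ⊤)
    (L : ℕ) (hL : 0 < L)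
    (hcoset : ∀ g : G, ∃ s ∈ S ^ L,
      (QuotientGroup.mk s : G ⧸ N) = (QuotientGroup.mk g : G ⧸ N)) :
    Subgroup.closure (S ^ (2 * L + 1) ∩ (N : Set G)) = N := by
  classical
  set H := Subgroup.closure (S ^ (2 * L + 1) ∩ (N : Set G)) with hH
  choose r hrS hrN using hcoset
  have hmemN : ∀ g : G, (r g)⁻¹ * g ∈ N := fun g => (QuotientGroup.eq).mp (hrN g)
  have hsub : S ^ L ⊆ S ^ (2 * L + 1) :=
    Set.pow_subset_pow_right hSone (by omega)
  have hinvpow : (S ^ L)⁻¹ = S ^ L := by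
    rw [← inv_pow, hSsymm]
  -- membership in H of an element of S^L ∩ N
  have hgenmem : ∀ x : G, x ∈ S ^ L → x ∈ N → x ∈ H :=
    fun x hx hxN => Subgroup.subset_closure ⟨hsub hx, hxN⟩
  have key : ∀ k : ℕ, ∀ g ∈ S ^ k, g * (r g)⁻¹ ∈ H := by
    intro k
    induction k with
    | zero =>
      intro g hg
      rw [pow_zero, Set.mem_one] at hg
      subst hg
      have h1 : r 1 ∈ H := hgenmem _ (hrS 1) (by simpa using hmemN 1)
      simpa using inv_mem h1
    | succ k ih =>
      intro g hg
      rw [pow_succ] at hg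
      obtain ⟨g', hg', s, hs, rfl⟩ := hg
      have h1 : g' * (r g')⁻¹ ∈ H := ih g' hg'
      have h2 : r g' * s * (r (g' * s))⁻¹ ∈ H := by
        apply Subgroup.subset_closure
        constructor
        · have m1 : r g' * s ∈ S ^ L * S ^ 1 :=
            Set.mul_mem_mul (hrS g') (by simpa using hs)
          have m2 : (r (g' * s))⁻¹ ∈ S ^ L := by
            rw [← hinvpow]; exact Set.inv_mem_inv.mpr (hrS (g' * s))
          have := Set.mul_mem_mul m1 m2
          rw [← pow_add, ← pow_add] at this
          have h21 : L + 1 + L = 2 * L + 1 := by omega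
          rwa [h21] at this
        · show r g' * s * (r (g' * s))⁻¹ ∈ N
          rw [← QuotientGroup.eq_one_iff]
          have e1 : (QuotientGroup.mk (r g') : G ⧸ N) = QuotientGroup.mk g' := hrN g'
          have e2 : (QuotientGroup.mk (r (g' * s)) : G ⧸ N) = QuotientGroup.mk (g' * s) :=
            hrN (g' * s)
          simp only [QuotientGroup.mk_mul, QuotientGroup.mk_inv, e1, e2]
          group
      have h3 := mul_mem h1 h2
      have e : g' * (r g')⁻¹ * (r g' * s * (r (g' * s))⁻¹) = g' * s * (r (g' * s))⁻¹ := by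
        group
      rwa [e] at h3
  apply le_antisymm
  · rw [hH, Subgroup.closure_le]
    exact fun x hx => hx.2
  · intro n hn
    have hn' : n ∈ Submonoid.closure S := by
      have : n ∈ (Subgroup.closure S).toSubmonoid := by
        rw [hSgen]; trivial
      rw [Subgroup.closure_toSubmonoid, hSsymm, Set.union_self] at this
      exact this
    obtain ⟨l, hl, hprod⟩ := Submonoid.exists_list_of_mem_closure hn'
    have hmem : n ∈ S ^ l.length := by
      subst hprod
      clear hn hn'
      induction l with
      | nil => simp [Set.mem_one]
      | cons a t ih =>
        rw [List.prod_cons, List.length_cons, pow_succ']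
        exact Set.mul_mem_mul (hl a List.mem_cons_self)
          (ih fun x hx => hl x (List.mem_cons_of_mem a hx))
    have h1 := key l.length n hmem
    have hrnN : r n ∈ N := by
      have := hmemN n
      have : (r n)⁻¹ ∈ N := by
        have h2 := mul_mem this (inv_mem hn)
        simpa [mul_assoc] using h2
      simpa using inv_mem this
    have h2 : r n ∈ H := hgenmem _ (hrS n) hrnN
    have h3 := mul_mem h1 h2
    simpa using h3
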